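/- arXiv:1305.4421 — 2 statements merged into one kernel-verified Lean document; each statement's English description precedes it below -/
import Mathlib

section
/- Let x = (s_0, s_1, …) ∈ {0,1}^ℕ be a realization and let μ' = ε_{λ'} and μ'' = ε_{λ''} be two exchangeable theories on {0,1}^ℕ, where λ', λ'' are Borel probability measures on [0,1]. If μ'(1 | s_0,…,s_{n-1}) = μ''(1 | s_0,…,s_{n-1}) for every n ∈ ℕ (in particular all these conditional forecasts are defined), then λ' = λ'' and hence μ' = μ''. -/
open MeasureTheory Filter

/-- The realization space Ω = {0,1}^ℕ. -/
abbrev Omega : Type := ℕ → Bool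

/-- The cylinder set N(σ) of realizations extending the partial realization σ. -/
def cyl (σ : List Bool) : Set Omega := {x | ∀ i : Fin σ.length, x i.1 = σ.get i}

/-- The partial realization (s₀, …, s_{n-1}) consisting of the first n outcomes of x. -/
def pref (x : Omega) (n : ℕ) : List Bool := List.ofFn (fun i : Fin n => x i.1)

/-- The forecast μ(1 | σ) = μ(N(σ·1))/μ(N(σ)). -/
noncomputable def forecastOne (μ : Measure Omega) (σ : List Bool) : ℝ :=
  (μ (cyl (σ ++ [true]))).toReal / (μ (cyl σ)).toReal

/-- ∏_{i<n} q^{s_i} (1-q)^{1-s_i} for the partial realization σ. -/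
noncomputable def bern (σ : List Bool) (q : unitInterval) : ℝ :=
  ∏ i : Fin σ.length, (if σ.get i then (q : ℝ) else 1 - (q : ℝ))

/-- μ is the exchangeable theory ε_λ: the i.i.d. mixture with prior λ on the parameter. -/
def IsMixtureOf (μ : Measure Omega) (l : Measure unitInterval) : Prop :=
  ∀ σ : List Bool, μ (cyl σ) = ENNReal.ofReal (∫ q, bern σ q ∂l)

section Aux

lemma bern_eq (σ : List Bool) (q : unitInterval) :
    bern σ q = (σ.map (fun s => if s then (q:ℝ) else 1 - q)).prod := by
  unfold bern
  induction σ with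
  | nil => simp
  | cons c σ ih =>
    simp only [List.length_cons, Fin.prod_univ_succ, List.map_cons, List.prod_cons]
    rw [← ih]
    rfl

lemma bern_nil (q : unitInterval) : bern [] q = 1 := by simp [bern]

lemma bern_append (σ : List Bool) (c : Bool) (q : unitInterval) :
    bern (σ ++ [c]) q = bern σ q * (if c then (q:ℝ) else 1 - q) := by
  simp [bern_eq]

lemma bern_nonneg (σ : List Bool) (q : unitInterval) : 0 ≤ bern σ q := by
  unfold bern
  apply Finset.prod_nonneg
  intro i _
  rcases q.2 with ⟨h0, h1⟩
  split
  · exact h0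
  · linarith

lemma bern_continuous_aux (σ : List Bool) :
    Continuous (fun q : unitInterval => (σ.map (fun s => if s then (q:ℝ) else 1 - q)).prod) := by
  induction σ with
  | nil => exact continuous_const
  | cons c σ ih =>
    simp only [List.map_cons, List.prod_cons]
    refine Continuous.mul ?_ ih
    cases c <;> simp <;> fun_prop

lemma bern_continuous (σ : List Bool) : Continuous (bern σ) :=
  (continuous_congr (fun q => (bern_eq σ q).symm)).mp (bern_continuous_aux σ)

lemma integ_of_cont (l : MeasureTheory.Measure unitInterval) [MeasureTheory.IsFiniteMeasure l]
    {f : unitInterval → ℝ} (hf : Continuous f) : MeasureTheory.Integrable f l :=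
  hf.integrable_of_hasCompactSupport (HasCompactSupport.of_compactSpace f)

lemma pref_succ (x : Omega) (n : ℕ) : pref x (n + 1) = pref x n ++ [x n] := by
  unfold pref
  rw [List.ofFn_succ']
  simp [List.concat_eq_append, Fin.coe_castSucc]

lemma pref_length (x : Omega) (n : ℕ) : (pref x n).length = n := by simp [pref]

lemma mem_cyl_pref (x : Omega) (n : ℕ) : x ∈ cyl (pref x n) := by
  intro i
  show x i.1 = (pref x n).get i
  rw [List.get_eq_getElem]
  simp [pref]

lemma mixture_toReal {μ : MeasureTheory.Measure Omega} {l : MeasureTheory.Measure unitInterval}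
    (h : IsMixtureOf μ l) (σ : List Bool) :
    (μ (cyl σ)).toReal = ∫ q, bern σ q ∂l := by
  rw [h σ, ENNReal.toReal_ofReal (MeasureTheory.integral_nonneg fun q => bern_nonneg σ q)]

lemma cyl_measurable (σ : List Bool) : MeasurableSet (cyl σ) := by
  have : cyl σ = ⋂ i : Fin σ.length, (fun x : Omega => x i.1) ⁻¹' {σ.get i} := by
    ext y; simp [cyl]
  rw [this]
  exact MeasurableSet.iInter fun i => (measurable_pi_apply i.1) trivial

lemma omega_generateFrom :
    (inferInstance : MeasurableSpace Omega)
      = MeasurableSpace.generateFrom {s | ∃ σ : List Bool, s = cyl σ} := by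
  apply le_antisymm
  · -- pi ≤ generateFrom
    have hm : ∀ i : ℕ, @Measurable Omega Bool
        (MeasurableSpace.generateFrom {s | ∃ σ : List Bool, s = cyl σ}) ⊤ (fun x => x i) := by
      intro i s _
      have hset : (fun x : Omega => x i) ⁻¹' s
          = ⋃ (σ : List Bool) (_ : ∃ h : i < σ.length, σ.get ⟨i, h⟩ ∈ s), cyl σ := by
        ext y
        constructor
        · intro hy
          refine Set.mem_iUnion.2 ⟨pref y (i + 1), Set.mem_iUnion.2 ⟨⟨?_, ?_⟩, mem_cyl_pref _ _⟩⟩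
          · rw [pref_length]; omega
          · have hget : (pref y (i + 1)).get ⟨i, by rw [pref_length]; omega⟩ = y i := by
              simp only [pref, List.get_ofFn]; rfl
            rw [hget]; exact hy
        · intro hy
          rcases Set.mem_iUnion.1 hy with ⟨σ, hσ⟩
          rcases Set.mem_iUnion.1 hσ with ⟨⟨h, hmem⟩, hycyl⟩
          have := hycyl ⟨i, h⟩
          simp only [Set.mem_preimage]
          rw [this]
          exact hmem
      rw [hset]
      exact MeasurableSet.iUnion fun σ => MeasurableSet.iUnion fun _ =>
        MeasurableSpace.measurableSet_generateFrom ⟨σ, rfl⟩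
    exact iSup_le fun i => (hm i).comap_le
  · exact MeasurableSpace.generateFrom_le fun s ⟨σ, hσ⟩ => hσ ▸ cyl_measurable σ

lemma cyl_piSystem : IsPiSystem {s : Set Omega | ∃ σ : List Bool, s = cyl σ} := by
  rintro s ⟨σ, rfl⟩ t ⟨τ, rfl⟩ ⟨y, hy⟩
  have main : ∀ σ τ : List Bool, σ.length ≤ τ.length → y ∈ cyl σ ∩ cyl τ →
      cyl σ ∩ cyl τ = cyl τ := by
    intro σ τ hle ⟨hy1, hy2⟩
    apply Set.inter_eq_self_of_subset_right
    intro z hz i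
    have h1 : y i.1 = σ.get i := hy1 i
    have h2 : y i.1 = τ.get ⟨i.1, lt_of_lt_of_le i.2 hle⟩ := hy2 ⟨i.1, lt_of_lt_of_le i.2 hle⟩
    have h3 : z i.1 = τ.get ⟨i.1, lt_of_lt_of_le i.2 hle⟩ := hz ⟨i.1, lt_of_lt_of_le i.2 hle⟩
    rw [h3, ← h2, h1]
  rcases le_total σ.length τ.length with h | h
  · rw [main σ τ h hy]; exact ⟨τ, rfl⟩
  · rw [Set.inter_comm] at hy ⊢
    rw [main τ σ h hy]; exact ⟨σ, rfl⟩

end Aux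
/-- Lemma: if two exchangeable theories μ' = ε_{λ'} and μ'' = ε_{λ''} produce the same
(well-defined) forecasts along a single realization x, then λ' = λ'' and μ' = μ''. -/
theorem deFinetti_forecasts_determine_prior
    (x : Omega)
    (l' l'' : Measure unitInterval) [IsProbabilityMeasure l'] [IsProbabilityMeasure l'']
    (μ' μ'' : Measure Omega) [IsProbabilityMeasure μ'] [IsProbabilityMeasure μ'']
    (h' : IsMixtureOf μ' l') (h'' : IsMixtureOf μ'' l'')
    (hpos' : ∀ n : ℕ, 0 < μ' (cyl (pref x n)))
    (hpos'' : ∀ n : ℕ, 0 < μ'' (cyl (pref x n)))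
    (heq : ∀ n : ℕ, forecastOne μ' (pref x n) = forecastOne μ'' (pref x n)) :
    l' = l'' ∧ μ' = μ'' := by
  have int' : ∀ {f : unitInterval → ℝ}, Continuous f → Integrable f l' :=
    fun hf => integ_of_cont l' hf
  have int'' : ∀ {f : unitInterval → ℝ}, Continuous f → Integrable f l'' :=
    fun hf => integ_of_cont l'' hf
  -- positivity of the denominators
  have hd : ∀ n : ℕ, 0 < ∫ q, bern (pref x n) q ∂l' := by
    intro n
    have h0 := hpos' n
    rw [h' (pref x n)] at h0
    exact ENNReal.ofReal_pos.mp h0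
  -- the l'-integrals and l''-integrals of bern (pref x n) agree
  have key : ∀ n : ℕ, ∫ q, bern (pref x n) q ∂l' = ∫ q, bern (pref x n) q ∂l'' := by
    intro n
    induction n with
    | zero =>
      simp [pref, List.ofFn_zero, bern_nil]
    | succ n ih =>
      have hnum : ∫ q, bern (pref x n) q * (q:ℝ) ∂l' = ∫ q, bern (pref x n) q * (q:ℝ) ∂l'' := by
        have hf := heq n
        unfold forecastOne at hf
        rw [mixture_toReal h', mixture_toReal h', mixture_toReal h'', mixture_toReal h''] at hf
        have e1 : ∀ l : Measure unitInterval,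
            ∫ q, bern (pref x n ++ [true]) q ∂l = ∫ q, bern (pref x n) q * (q:ℝ) ∂l := by
          intro l
          apply integral_congr_ae
          filter_upwards with q
          rw [bern_append]
          simp
        rw [e1 l', e1 l'', ih] at hf
        have hdd : ∫ q, bern (pref x n) q ∂l'' ≠ 0 := by rw [← ih]; exact (hd n).ne'
        field_simp [hdd] at hf
        exact hf
      rw [pref_succ]
      cases hx : x n
      · have e : ∀ q : unitInterval, bern (pref x n ++ [false]) q
            = bern (pref x n) q - bern (pref x n) q * (q:ℝ) := by
          intro q; rw [bern_append]; simp; ring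
        simp only [e]
        rw [integral_sub (int' (bern_continuous _))
            (int' (f := fun q => bern (pref x n) q * (q:ℝ)) ((bern_continuous _).mul (by fun_prop))),
          integral_sub (int'' (bern_continuous _))
            (int'' (f := fun q => bern (pref x n) q * (q:ℝ)) ((bern_continuous _).mul (by fun_prop))), ih, hnum]
      · have e : ∀ q : unitInterval, bern (pref x n ++ [true]) q
            = bern (pref x n) q * (q:ℝ) := by
          intro q; rw [bern_append]; simp
        simp only [e]
        exact hnum
  -- all weighted moments agree
  have momA : ∀ k n : ℕ, ∫ q, (q:ℝ)^k * bern (pref x n) q ∂l'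
      = ∫ q, (q:ℝ)^k * bern (pref x n) q ∂l'' := by
    intro k
    induction k with
    | zero => intro n; simpa using key n
    | succ k ih =>
      intro n
      cases hx : x n
      · have e : ∀ q : unitInterval, (q:ℝ)^(k+1) * bern (pref x n) q
            = (q:ℝ)^k * bern (pref x n) q - (q:ℝ)^k * bern (pref x (n+1)) q := by
          intro q
          rw [pref_succ, hx, bern_append]
          simp only [Bool.false_eq_true, if_false]
          ring
        simp only [e]
        rw [integral_sub (int' (f := fun q => (q:ℝ)^k * bern (pref x n) q) ((by fun_prop : Continuous fun q : unitInterval => (q:ℝ)^k).mul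
              (bern_continuous _)))
            (int' (f := fun q => (q:ℝ)^k * bern (pref x (n+1)) q) ((by fun_prop : Continuous fun q : unitInterval => (q:ℝ)^k).mul
              (bern_continuous _))),
          integral_sub (int'' (f := fun q => (q:ℝ)^k * bern (pref x n) q) ((by fun_prop : Continuous fun q : unitInterval => (q:ℝ)^k).mul
              (bern_continuous _)))
            (int'' (f := fun q => (q:ℝ)^k * bern (pref x (n+1)) q) ((by fun_prop : Continuous fun q : unitInterval => (q:ℝ)^k).mul
              (bern_continuous _))), ih n, ih (n+1)]
      · have e : ∀ q : unitInterval, (q:ℝ)^(k+1) * bern (pref x n) q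
            = (q:ℝ)^k * bern (pref x (n+1)) q := by
          intro q
          rw [pref_succ, hx, bern_append]
          simp only [if_true]
          ring
        simp only [e]
        exact ih (n+1)
  -- the moments agree
  have hm : ∀ k : ℕ, ∫ q, (q:ℝ)^k ∂l' = ∫ q, (q:ℝ)^k ∂l'' := by
    intro k
    have := momA k 0
    simpa [pref, List.ofFn_zero, bern_nil] using this
  -- polynomial integrals agree
  have hpoly : ∀ p : Polynomial ℝ, ∫ q, p.eval (q:ℝ) ∂l' = ∫ q, p.eval (q:ℝ) ∂l'' := by
    intro p
    induction p using Polynomial.induction_on' with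
    | add p q hp hq =>
      have cp : Continuous fun q : unitInterval => p.eval (q:ℝ) :=
        p.continuous.comp continuous_subtype_val
      have cq : Continuous fun r : unitInterval => q.eval (r:ℝ) :=
        q.continuous.comp continuous_subtype_val
      simp only [Polynomial.eval_add]
      rw [integral_add (int' cp) (int' cq), integral_add (int'' cp) (int'' cq), hp, hq]
    | monomial k a =>
      simp only [Polynomial.eval_monomial]
      rw [integral_const_mul, integral_const_mul, hm k]
  -- integrals of continuous functions agree
  have hC : ∀ f : C(unitInterval, ℝ), ∫ q, f q ∂l' = ∫ q, f q ∂l'' := by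
    intro f
    apply eq_of_forall_dist_le
    intro ε hε
    have hf : f ∈ closure ((polynomialFunctions unitInterval : Subalgebra ℝ C(unitInterval, ℝ))
        : Set C(unitInterval, ℝ)) := by
      have htop := polynomialFunctions_closure_eq_top'
      have : f ∈ (polynomialFunctions unitInterval).topologicalClosure := by
        rw [htop]; trivial
      exact this
    rcases Metric.mem_closure_iff.mp hf (ε/2) (by linarith) with ⟨g, hg, hdist⟩
    rcases hg with ⟨P, -, hP⟩
    have hgP : ∀ q : unitInterval, g q = P.eval (q:ℝ) := by
      intro q
      rw [← hP]
      rfl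
    have bound : ∀ l : Measure unitInterval, ∀ _ : IsProbabilityMeasure l,
        |(∫ q, f q ∂l) - ∫ q, g q ∂l| ≤ ε/2 := by
      intro l hl
      rw [← integral_sub (integ_of_cont l f.continuous) (integ_of_cont l g.continuous)]
      calc |∫ q, (f q - g q) ∂l| ≤ dist f g * (l Set.univ).toReal := by
            rw [← Real.norm_eq_abs]
            apply norm_integral_le_of_norm_le_const
            filter_upwards with q
            have := ContinuousMap.dist_apply_le_dist (f := f) (g := g) q
            simpa [Real.dist_eq] using this
        _ ≤ ε/2 := by rw [measure_univ]; simp; linarith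
    have hgint : ∫ q, g q ∂l' = ∫ q, g q ∂l'' := by
      have e1 : ∀ l : Measure unitInterval, ∫ q, g q ∂l = ∫ q, P.eval (q:ℝ) ∂l := by
        intro l
        apply integral_congr_ae
        filter_upwards with q using hgP q
      rw [e1 l', e1 l'']
      exact hpoly P
    have b1 := bound l' inferInstance
    have b2 := bound l'' inferInstance
    rw [Real.dist_eq]
    calc |(∫ q, f q ∂l') - ∫ q, f q ∂l''|
        ≤ |(∫ q, f q ∂l') - ∫ q, g q ∂l'| + |(∫ q, g q ∂l'') - ∫ q, f q ∂l''| := by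
          rw [hgint]
          have := abs_sub_abs_le_abs_sub (0:ℝ) (0:ℝ)
          calc |(∫ q, f q ∂l') - ∫ q, f q ∂l''|
              = |((∫ q, f q ∂l') - ∫ q, g q ∂l'') + ((∫ q, g q ∂l'') - ∫ q, f q ∂l'')| := by
                ring_nf
            _ ≤ |(∫ q, f q ∂l') - ∫ q, g q ∂l''| + |(∫ q, g q ∂l'') - ∫ q, f q ∂l''| :=
                abs_add_le _ _
      _ ≤ ε/2 + ε/2 := add_le_add b1 (by rw [abs_sub_comm]; exact b2)
      _ = ε := by ring
  -- conclude l' = l''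
  have hl : l' = l'' := by
    apply MeasureTheory.ext_of_forall_lintegral_eq_of_IsFiniteMeasure
    intro f
    have fin1 : ∫⁻ q, (f q : ENNReal) ∂l' ≠ ⊤ :=
      (BoundedContinuousFunction.lintegral_lt_top_of_nnreal l' f).ne
    have fin2 : ∫⁻ q, (f q : ENNReal) ∂l'' ≠ ⊤ :=
      (BoundedContinuousFunction.lintegral_lt_top_of_nnreal l'' f).ne
    rw [← ENNReal.toReal_eq_toReal_iff' fin1 fin2,
      BoundedContinuousFunction.toReal_lintegral_coe_eq_integral,
      BoundedContinuousFunction.toReal_lintegral_coe_eq_integral]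
    exact hC ⟨fun q => (f q : ℝ), NNReal.continuous_coe.comp f.continuous⟩
  refine ⟨hl, ?_⟩
  have hcy : ∀ σ : List Bool, μ' (cyl σ) = μ'' (cyl σ) := by
    intro σ
    rw [h' σ, h'' σ, hl]
  refine MeasureTheory.ext_of_generate_finite _ omega_generateFrom cyl_piSystem ?_ ?_
  · rintro s ⟨σ, rfl⟩
    exact hcy σ
  · simp
end

section
/- Let λ' and λ'' be Borel probability measures on [0,1], and suppose there exists a sequence (s_0, s_1, …) ∈ {0,1}^ℕ such that ∫ ∏_{i=0}^{n-1} q^{s_i}(1−q)^{1−s_i} λ'(dq) = ∫ ∏_{i=0}^{n-1} q^{s_i}(1−q)^{1−s_i} λ''(dq) for every n ∈ ℕ. Then ∫ q^n λ'(dq) = ∫ q^n λ''(dq) for every n ∈ ℕ, and consequently λ' = λ''. -/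
open MeasureTheory Filter

lemma continuous_integrable_unitInterval (μ : Measure unitInterval) [IsFiniteMeasure μ]
    {g : unitInterval → ℝ} (hg : Continuous g) : Integrable g μ :=
  hg.integrable_of_hasCompactSupport (HasCompactSupport.of_compactSpace g)

lemma integrable_pow_unitInterval (μ : Measure unitInterval) [IsFiniteMeasure μ] (k : ℕ) :
    Integrable (fun q : unitInterval => (q : ℝ) ^ k) μ :=
  continuous_integrable_unitInterval μ (by continuity)

/-- Integral of a polynomial as a linear combination of moments. -/
lemma integral_poly_eval (μ : Measure unitInterval) [IsFiniteMeasure μ] (p : Polynomial ℝ)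
    (n : ℕ) (hn : p.natDegree < n) :
    (∫ q, p.eval (q : ℝ) ∂μ) =
      ∑ k ∈ Finset.range n, p.coeff k * ∫ q, (q : ℝ) ^ k ∂μ := by
  have hev : ∀ q : unitInterval,
      p.eval (q : ℝ) = ∑ k ∈ Finset.range n, p.coeff k * ((q : ℝ)) ^ k := by
    intro q
    exact Polynomial.eval_eq_sum_range' hn _
  simp_rw [hev]
  rw [integral_finset_sum]
  · refine Finset.sum_congr rfl fun k _ => ?_
    rw [integral_const_mul]
  · intro k _
    exact (integrable_pow_unitInterval μ k).const_mul _

/-- Two Borel probability measures on [0,1] whose integrals of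
∏_{i<n} q^{s_i}(1-q)^{1-s_i} agree along a single sequence (s₀,s₁,…) of outcomes have
the same moments, and are therefore equal. -/
theorem equal_bernoulli_integrals_imp_equal_measures
    (lam' lam'' : Measure unitInterval)
    [IsProbabilityMeasure lam'] [IsProbabilityMeasure lam'']
    (s : ℕ → Bool)
    (h : ∀ n : ℕ,
      (∫ q, (∏ i ∈ Finset.range n, (if s i then (q : ℝ) else 1 - (q : ℝ))) ∂lam') =
      (∫ q, (∏ i ∈ Finset.range n, (if s i then (q : ℝ) else 1 - (q : ℝ))) ∂lam'')) :
    (∀ n : ℕ, (∫ q, ((q : ℝ) ^ n) ∂lam') = ∫ q, ((q : ℝ) ^ n) ∂lam'') ∧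
    lam' = lam'' := by
  -- the product polynomial
  set pol : ℕ → Polynomial ℝ :=
    fun n => ∏ i ∈ Finset.range n, (if s i then Polynomial.X else 1 - Polynomial.X) with hpol
  have hfac_ne : ∀ i : ℕ, (if s i then Polynomial.X else 1 - Polynomial.X : Polynomial ℝ) ≠ 0 := by
    intro i
    by_cases hs : s i
    · simp [hs, Polynomial.X_ne_zero]
    · simp only [hs, if_neg Bool.false_ne_true]
      intro h0
      have := congrArg (Polynomial.eval 0) h0
      simp at this
  have hfac_deg : ∀ i : ℕ,
      (if s i then Polynomial.X else 1 - Polynomial.X : Polynomial ℝ).natDegree = 1 := by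
    intro i
    by_cases hs : s i
    · simp [hs]
    · simp only [hs, if_neg Bool.false_ne_true]
      have : (1 - Polynomial.X : Polynomial ℝ) = -(Polynomial.X - Polynomial.C 1) := by
        rw [Polynomial.C_1]; ring
      rw [this, Polynomial.natDegree_neg, Polynomial.natDegree_X_sub_C]
  have hpol_ne : ∀ n, pol n ≠ 0 := fun n =>
    Finset.prod_ne_zero_iff.mpr fun i _ => hfac_ne i
  have hpol_deg : ∀ n, (pol n).natDegree = n := by
    intro n
    rw [hpol, Polynomial.natDegree_prod _ _ fun i _ => hfac_ne i]
    simp [hfac_deg]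
  have hpol_eval : ∀ n (q : unitInterval),
      (pol n).eval (q : ℝ) =
        ∏ i ∈ Finset.range n, (if s i then (q : ℝ) else 1 - (q : ℝ)) := by
    intro n q
    rw [hpol, Polynomial.eval_prod]
    refine Finset.prod_congr rfl fun i _ => ?_
    by_cases hs : s i <;> simp [hs]
  -- moments agree
  have hmom : ∀ n : ℕ, (∫ q, ((q : ℝ) ^ n) ∂lam') = ∫ q, ((q : ℝ) ^ n) ∂lam'' := by
    intro n
    induction n using Nat.strong_induction_on with
    | _ n ih =>
      have hdeg : (pol n).natDegree < n + 1 := by rw [hpol_deg]; omega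
      have h1 := integral_poly_eval lam' (pol n) (n + 1) hdeg
      have h2 := integral_poly_eval lam'' (pol n) (n + 1) hdeg
      simp_rw [hpol_eval n] at h1 h2
      rw [h n, h2] at h1
      -- isolate the top term
      rw [Finset.sum_range_succ, Finset.sum_range_succ] at h1
      have hlow : ∀ k ∈ Finset.range n,
          (pol n).coeff k * ∫ q, (q : ℝ) ^ k ∂lam'' =
          (pol n).coeff k * ∫ q, (q : ℝ) ^ k ∂lam' := by
        intro k hk
        rw [ih k (Finset.mem_range.mp hk)]
      rw [Finset.sum_congr rfl hlow] at h1
      have htop : (pol n).coeff n * (∫ q, (q : ℝ) ^ n ∂lam'') =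
          (pol n).coeff n * ∫ q, (q : ℝ) ^ n ∂lam' := by linarith
      have hcoeff : (pol n).coeff n ≠ 0 := by
        have := Polynomial.leadingCoeff_ne_zero.mpr (hpol_ne n)
        rwa [Polynomial.leadingCoeff, hpol_deg] at this
      exact (mul_left_cancel₀ hcoeff htop).symm
  refine ⟨hmom, ?_⟩
  -- integrals of polynomials agree
  have hpolyint : ∀ p : Polynomial ℝ,
      (∫ q, p.eval (q : ℝ) ∂lam') =
      ∫ q, p.eval (q : ℝ) ∂lam'' := by
    intro p
    rw [integral_poly_eval lam' p (p.natDegree + 1) (by omega),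
        integral_poly_eval lam'' p (p.natDegree + 1) (by omega)]
    exact Finset.sum_congr rfl fun k _ => by rw [hmom k]
  -- integrals of continuous functions agree, by Weierstrass approximation
  have hcont : ∀ f : C(unitInterval, ℝ), (∫ q, f q ∂lam') = ∫ q, f q ∂lam'' := by
    intro f
    have hdist : ∀ ε : ℝ, 0 < ε →
        |(∫ q, f q ∂lam') - ∫ q, f q ∂lam''| ≤ 2 * ε := by
      intro ε hε
      have hf_mem : f ∈ closure ((polynomialFunctions unitInterval : Set C(unitInterval, ℝ))) := by
        have := polynomialFunctions_closure_eq_top'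
        rw [← Subalgebra.topologicalClosure_coe, this]
        simp
      obtain ⟨g, hg_mem, hg_dist⟩ := Metric.mem_closure_iff.mp hf_mem ε hε
      rw [polynomialFunctions_coe] at hg_mem
      obtain ⟨p, rfl⟩ := hg_mem
      have hgp : ∀ q : unitInterval,
          (Polynomial.toContinuousMapOnAlgHom unitInterval p) q = p.eval (q : ℝ) :=
        fun q => rfl
      set g : C(unitInterval, ℝ) := Polynomial.toContinuousMapOnAlgHom unitInterval p with hg
      have hbound : ∀ q : unitInterval, ‖f q - g q‖ ≤ ε := by
        intro q
        have := ContinuousMap.dist_apply_le_dist (f := f) (g := g) q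
        have h2 : dist (f q) (g q) ≤ dist f g := this
        rw [Real.dist_eq] at h2
        rw [Real.norm_eq_abs]
        linarith [hg_dist.le]
      have hint : ∀ (μ : Measure unitInterval), IsProbabilityMeasure μ →
          |(∫ q, f q ∂μ) - ∫ q, g q ∂μ| ≤ ε := by
        intro μ hμ
        rw [← integral_sub (continuous_integrable_unitInterval μ f.continuous)
              (continuous_integrable_unitInterval μ g.continuous)]
        have := norm_integral_le_of_norm_le_const (μ := μ)
          (f := fun q => f q - g q) (C := ε) (Eventually.of_forall hbound)
        simpa [measure_univ] using this
      have hgeq : (∫ q, g q ∂lam') = ∫ q, g q ∂lam'' := by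
        have hfun : (fun q : unitInterval => g q) = fun q : unitInterval => p.eval (q : ℝ) := funext hgp
        rw [hfun]
        exact hpolyint p
      have t1 := hint lam' inferInstance
      have t2 := hint lam'' inferInstance
      calc |(∫ q, f q ∂lam') - ∫ q, f q ∂lam''|
          = |((∫ q, f q ∂lam') - ∫ q, g q ∂lam') + ((∫ q, g q ∂lam'') - ∫ q, f q ∂lam'')| := by
            rw [hgeq]; ring_nf
        _ ≤ |(∫ q, f q ∂lam') - ∫ q, g q ∂lam'| + |(∫ q, g q ∂lam'') - ∫ q, f q ∂lam''| :=
            abs_add_le _ _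
        _ ≤ ε + ε := by rw [abs_sub_comm (∫ q, g q ∂lam'')]; exact add_le_add t1 t2
        _ = 2 * ε := by ring
    have : |(∫ q, f q ∂lam') - ∫ q, f q ∂lam''| = 0 := by
      by_contra hne
      have hpos : 0 < |(∫ q, f q ∂lam') - ∫ q, f q ∂lam''| :=
        lt_of_le_of_ne (abs_nonneg _) (Ne.symm hne)
      have := hdist (|(∫ q, f q ∂lam') - ∫ q, f q ∂lam''| / 4) (by linarith)
      linarith
    have := abs_eq_zero.mp this
    linarith
  -- conclude equality of measures
  apply ext_of_forall_lintegral_eq_of_IsFiniteMeasure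
  intro f
  have h1 := BoundedContinuousFunction.lintegral_lt_top_of_nnreal lam' f
  have h2 := BoundedContinuousFunction.lintegral_lt_top_of_nnreal lam'' f
  rw [← ENNReal.toReal_eq_toReal_iff' h1.ne h2.ne,
    BoundedContinuousFunction.toReal_lintegral_coe_eq_integral,
    BoundedContinuousFunction.toReal_lintegral_coe_eq_integral]
  exact hcont ⟨fun q => (f q : ℝ), NNReal.continuous_coe.comp f.continuous⟩
end
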